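/- If A, B ⊆ ℕ are dynamical C*-sets, then A ∩ B is a dynamical C*-set. -/

import Mathlib

open MeasureTheory Filter

/-- Weak mixing for a measure-preserving system. -/
def WeakMixing {X : Type*} [MeasurableSpace X] (μ : Measure X) (T : X → X) : Prop :=
  ∀ A B : Set X, MeasurableSet A → MeasurableSet B →
    Tendsto (fun N : ℕ => (1 / N : ℝ) * ∑ n ∈ Finset.Icc 1 N,
      |(μ (A ∩ T^[n] ⁻¹' B)).toReal - (μ A).toReal * (μ B).toReal|)
      atTop (nhds 0)

/-- `A ⊆ ℕ` is a dynamical C*-set: the positive return-time set of two sets of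
positive measure in some weakly mixing probability system is contained in `A`. -/
def DynCStar (A : Set ℕ) : Prop :=
  ∃ (X : Type) (_ : MeasurableSpace X) (μ : Measure X) (T : X → X),
    IsProbabilityMeasure μ ∧ MeasurePreserving T μ μ ∧ WeakMixing μ T ∧
    ∃ A₀ A₁ : Set X, MeasurableSet A₀ ∧ MeasurableSet A₁ ∧ 0 < μ A₀ * μ A₁ ∧
      {n : ℕ | 0 < μ (A₀ ∩ T^[n] ⁻¹' A₁)} ⊆ A

section Avg

private noncomputable def avg (u : ℕ → ℝ) (N : ℕ) : ℝ :=
  (1 / N : ℝ) * ∑ n ∈ Finset.Icc 1 N, u n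

private lemma avg_le_avg {u v : ℕ → ℝ} (h : ∀ n, u n ≤ v n) (N : ℕ) :
    avg u N ≤ avg v N :=
  mul_le_mul_of_nonneg_left (Finset.sum_le_sum fun n _ => h n) (by positivity)

private lemma avg_nonneg' {u : ℕ → ℝ} (h : ∀ n, 0 ≤ u n) (N : ℕ) : 0 ≤ avg u N :=
  mul_nonneg (by positivity) (Finset.sum_nonneg fun n _ => h n)

private lemma tendsto_avg_zero_of_le {u v : ℕ → ℝ} (h0 : ∀ n, 0 ≤ u n) (h : ∀ n, u n ≤ v n)
    (hv : Tendsto (avg v) atTop (nhds 0)) : Tendsto (avg u) atTop (nhds 0) :=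
  squeeze_zero (avg_nonneg' h0) (avg_le_avg h) hv

private lemma tendsto_avg_sum {ι : Type*} (s : Finset ι) (b : ι → ℕ → ℝ)
    (hb : ∀ i ∈ s, Tendsto (avg (b i)) atTop (nhds 0)) :
    Tendsto (avg (fun n => ∑ i ∈ s, b i n)) atTop (nhds 0) := by
  have h := tendsto_finset_sum s hb
  rw [Finset.sum_const, smul_zero] at h
  refine h.congr fun N => ?_
  rw [avg, Finset.sum_comm, Finset.mul_sum]
  rfl

private lemma avg_le_add_const {u v : ℕ → ℝ} {c : ℝ} (hc : 0 ≤ c)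
    (h : ∀ n, u n ≤ v n + c) (N : ℕ) : avg u N ≤ avg v N + c := by
  rcases Nat.eq_zero_or_pos N with hN | hN
  · subst hN; simp [avg]; linarith
  · have h1 : avg u N ≤ avg (fun n => v n + c) N := avg_le_avg h N
    have h2 : avg (fun n => v n + c) N = avg v N + c := by
      rw [avg, avg, Finset.sum_add_distrib, Finset.sum_const, Nat.card_Icc,
        Nat.add_sub_cancel, nsmul_eq_mul, mul_add]
      congr 1
      rw [← mul_assoc, one_div, inv_mul_cancel₀ (by exact_mod_cast hN.ne'), one_mul]
    linarith

private lemma tendsto_avg_zero_of_approx {a : ℕ → ℝ} {b : ℕ → ℕ → ℝ} {d : ℕ → ℝ}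
    (h0 : ∀ n, 0 ≤ a n) (hd0 : ∀ k, 0 ≤ d k)
    (hle : ∀ k n, a n ≤ b k n + d k)
    (hb : ∀ k, Tendsto (avg (b k)) atTop (nhds 0))
    (hd : Tendsto d atTop (nhds 0)) :
    Tendsto (avg a) atTop (nhds 0) := by
  rw [Metric.tendsto_nhds]
  intro ε hε
  obtain ⟨k, hk⟩ : ∃ k, d k < ε / 2 :=
    ((hd.eventually (gt_mem_nhds (half_pos hε))).exists)
  filter_upwards [(hb k).eventually (gt_mem_nhds (half_pos hε))] with N hN
  have h1 : avg a N ≤ avg (b k) N + d k := avg_le_add_const (hd0 k) (hle k) N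
  rw [Real.dist_eq, sub_zero, abs_of_nonneg (avg_nonneg' h0 N)]
  linarith

end Avg

section Helpers

private lemma abs_step {xk r p q dk : ℝ} (hr0 : 0 ≤ r) (hrd : r ≤ dk)
    (hq0 : 0 ≤ q) (hqd : q ≤ dk) :
    |xk + r - (p + q)| ≤ |xk - p| + dk := by
  have h1 : |xk + r - (p + q)| ≤ |xk - p| + |r - q| := by
    have h : xk + r - (p + q) = xk - p + (r - q) := by ring
    rw [h]; exact abs_add_le _ _
  have h2 : |r - q| ≤ dk := abs_sub_le_iff.2 ⟨by linarith, by linarith⟩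
  linarith

variable {Z : Type*} [MeasurableSpace Z] {μ : Measure Z} [IsProbabilityMeasure μ]

private lemma tor_split {G H : Set Z} (hG : MeasurableSet G) (hGH : G ⊆ H) :
    (μ H).toReal = (μ G).toReal + (μ (H \ G)).toReal := by
  have h := measure_inter_add_diff H hG (μ := μ)
  rw [Set.inter_eq_self_of_subset_right hGH] at h
  have h2 := congrArg ENNReal.toReal h
  rw [ENNReal.toReal_add (measure_ne_top μ _) (measure_ne_top μ _)] at h2
  linarith

private lemma tor_mono {G H : Set Z} (h : G ⊆ H) : (μ G).toReal ≤ (μ H).toReal :=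
  ENNReal.toReal_mono (measure_ne_top μ _) (measure_mono h)

end Helpers

section MixDef

variable {Z : Type*} [MeasurableSpace Z]

/-- The quantity whose Cesàro averages define weak mixing. -/
private noncomputable def mixFn (μ : Measure Z) (T : Z → Z) (E F : Set Z) (n : ℕ) : ℝ :=
  |(μ (E ∩ T^[n] ⁻¹' F)).toReal - (μ E).toReal * (μ F).toReal|

private def Mix (μ : Measure Z) (T : Z → Z) (E F : Set Z) : Prop :=
  Tendsto (fun N : ℕ => (1 / N : ℝ) * ∑ n ∈ Finset.Icc 1 N, mixFn μ T E F n) atTop (nhds 0)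

private lemma mixFn_nonneg (μ : Measure Z) (T : Z → Z) (E F : Set Z) (n : ℕ) :
    0 ≤ mixFn μ T E F n := abs_nonneg _

variable {μ : Measure Z} [IsProbabilityMeasure μ] {T : Z → Z}

private lemma tor_le_one (s : Set Z) : (μ s).toReal ≤ 1 := by
  have := ENNReal.toReal_mono (by simp) (prob_le_one (μ := μ) (s := s))
  simpa using this

private lemma tor_nonneg (s : Set Z) : 0 ≤ (μ s).toReal := ENNReal.toReal_nonneg

private lemma tor_inter_compl (hE : MeasurableSet E) (C : Set Z) :
    (μ (Eᶜ ∩ C)).toReal = (μ C).toReal - (μ (C ∩ E)).toReal := by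
  have h := measure_inter_add_diff C hE (μ := μ)
  have h2 : Eᶜ ∩ C = C \ E := by rw [Set.diff_eq, Set.inter_comm]
  rw [h2]
  have := congrArg ENNReal.toReal h
  rw [ENNReal.toReal_add (measure_ne_top μ _) (measure_ne_top μ _)] at this
  linarith

private lemma tor_compl (hE : MeasurableSet E) : (μ Eᶜ).toReal = 1 - (μ E).toReal := by
  rw [measure_compl hE (measure_ne_top μ _), measure_univ,
    ENNReal.toReal_sub_of_le prob_le_one (by simp), ENNReal.toReal_one]

variable (hT : MeasurePreserving T μ μ)

private lemma mix_empty_left (F : Set Z) : Mix μ T ∅ F := by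
  have : ∀ n, mixFn μ T ∅ F n = 0 := by
    intro n; simp [mixFn]
  simp only [Mix, this]
  simpa using tendsto_const_nhds

private lemma mix_empty_right (E : Set Z) : Mix μ T E ∅ := by
  have : ∀ n, mixFn μ T E ∅ n = 0 := by
    intro n; simp [mixFn]
  simp only [Mix, this]
  simpa using tendsto_const_nhds

include hT in
private lemma mix_compl_left {E F : Set Z} (hE : MeasurableSet E) (hF : MeasurableSet F)
    (h : Mix μ T E F) : Mix μ T Eᶜ F := by
  refine h.congr fun N => ?_
  congr 1
  refine Finset.sum_congr rfl fun n _ => ?_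
  have hpre : (μ (T^[n] ⁻¹' F)).toReal = (μ F).toReal := by
    rw [(hT.iterate n).measure_preimage hF.nullMeasurableSet]
  rw [mixFn, mixFn, tor_inter_compl hE, hpre, Set.inter_comm (T^[n] ⁻¹' F) E,
    tor_compl hE]
  rw [show (μ F).toReal - (μ (E ∩ T^[n] ⁻¹' F)).toReal -
      (1 - (μ E).toReal) * (μ F).toReal
      = -((μ (E ∩ T^[n] ⁻¹' F)).toReal - (μ E).toReal * (μ F).toReal) by ring, abs_neg]

include hT in
private lemma mix_compl_right {E F : Set Z} (hE : MeasurableSet E) (hF : MeasurableSet F)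
    (h : Mix μ T E F) : Mix μ T E Fᶜ := by
  refine h.congr fun N => ?_
  congr 1
  refine Finset.sum_congr rfl fun n _ => ?_
  have hCm : MeasurableSet (T^[n] ⁻¹' F) := (hT.measurable.iterate n) hF
  have h1 : (μ (E ∩ (T^[n] ⁻¹' F)ᶜ)).toReal
      = (μ E).toReal - (μ (E ∩ T^[n] ⁻¹' F)).toReal := by
    have h := measure_inter_add_diff E hCm (μ := μ)
    have := congrArg ENNReal.toReal h
    rw [ENNReal.toReal_add (measure_ne_top μ _) (measure_ne_top μ _)] at this
    rw [show E ∩ (T^[n] ⁻¹' F)ᶜ = E \ T^[n] ⁻¹' F from rfl]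
    linarith
  rw [mixFn, mixFn, Set.preimage_compl, h1, tor_compl hF]
  rw [show (μ E).toReal - (μ (E ∩ T^[n] ⁻¹' F)).toReal -
      (μ E).toReal * (1 - (μ F).toReal)
      = -((μ (E ∩ T^[n] ⁻¹' F)).toReal - (μ E).toReal * (μ F).toReal) by ring, abs_neg]

end MixDef

section Unions

variable {Z : Type*} [MeasurableSpace Z] {μ : Measure Z} [IsProbabilityMeasure μ]
  {T : Z → Z} (hT : MeasurePreserving T μ μ)

include hT in
private lemma mix_iUnion_left {F : Set Z} (hF : MeasurableSet F) (f : ℕ → Set Z)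
    (hd : Pairwise (Function.onFun Disjoint f)) (hm : ∀ i, MeasurableSet (f i))
    (hmix : ∀ i, Mix μ T (f i) F) : Mix μ T (⋃ i, f i) F := by
  set E := ⋃ i, f i with hEdef
  set Ek : ℕ → Set Z := fun k => ⋃ i ∈ Finset.range k, f i with hEkdef
  have hEkm : ∀ k, MeasurableSet (Ek k) :=
    fun k => (Finset.range k).measurableSet_biUnion (fun i _ => hm i)
  have hsub : ∀ k, Ek k ⊆ E := fun k => Set.iUnion₂_subset fun i _ => Set.subset_iUnion f i
  set d : ℕ → ℝ := fun k => (μ (E \ Ek k)).toReal with hddef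
  have hesplit : ∀ k, (μ E).toReal = (μ (Ek k)).toReal + d k :=
    fun k => tor_split (hEkm k) (hsub k)
  have hd0 : ∀ k, 0 ≤ d k := fun k => ENNReal.toReal_nonneg
  -- the approximating sequences
  set b : ℕ → ℕ → ℝ := fun k n => ∑ i ∈ Finset.range k, mixFn μ T (f i) F n with hbdef
  have hle : ∀ k n, mixFn μ T E F n ≤ b k n + d k := by
    intro k n
    have hC : MeasurableSet (T^[n] ⁻¹' F) := (hT.measurable.iterate n) hF
    set C := T^[n] ⁻¹' F
    have hdisj' : ((Finset.range k : Finset ℕ) : Set ℕ).PairwiseDisjoint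
        (fun i => f i ∩ C) := fun i _ j _ hij =>
      (hd hij).mono Set.inter_subset_left Set.inter_subset_left
    have hEkC : Ek k ∩ C = ⋃ i ∈ Finset.range k, (f i ∩ C) := by
      rw [hEkdef]; ext z; simp; tauto
    have h1 : (μ (Ek k ∩ C)).toReal = ∑ i ∈ Finset.range k, (μ (f i ∩ C)).toReal := by
      rw [hEkC, measure_biUnion_finset hdisj' (fun i _ => (hm i).inter hC),
        ENNReal.toReal_sum (fun i _ => measure_ne_top μ _)]
    have h2 : (μ (Ek k)).toReal = ∑ i ∈ Finset.range k, (μ (f i)).toReal := by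
      rw [hEkdef]
      rw [measure_biUnion_finset (fun i _ j _ hij => hd hij) (fun i _ => hm i),
        ENNReal.toReal_sum (fun i _ => measure_ne_top μ _)]
    have hfin : mixFn μ T (Ek k) F n ≤ b k n := by
      rw [mixFn, h1, h2, Finset.sum_mul, ← Finset.sum_sub_distrib]
      exact (Finset.abs_sum_le_sum_abs _ _).trans (le_of_eq rfl)
    have hxsplit : (μ (E ∩ C)).toReal
        = (μ (Ek k ∩ C)).toReal + (μ ((E ∩ C) \ (Ek k ∩ C))).toReal :=
      tor_split ((hEkm k).inter hC) (Set.inter_subset_inter_left _ (hsub k))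
    have hr_le : (μ ((E ∩ C) \ (Ek k ∩ C))).toReal ≤ d k := by
      refine tor_mono ?_
      intro z hz
      exact ⟨hz.1.1, fun h => hz.2 ⟨h, hz.1.2⟩⟩
    have hstep : mixFn μ T E F n ≤ mixFn μ T (Ek k) F n + d k := by
      rw [mixFn, mixFn, hxsplit, hesplit k, add_mul]
      exact abs_step ENNReal.toReal_nonneg hr_le
        (mul_nonneg (hd0 k) ENNReal.toReal_nonneg)
        (mul_le_of_le_one_right (hd0 k) (tor_le_one F))
    linarith
  have hb : ∀ k, Tendsto (avg (b k)) atTop (nhds 0) :=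
    fun k => tendsto_avg_sum (Finset.range k) _ (fun i _ => hmix i)
  have hdten : Tendsto d atTop (nhds 0) := by
    have hmono : Monotone Ek := by
      intro a c hac z hz
      simp only [hEkdef, Set.mem_iUnion, Finset.mem_range] at hz ⊢
      obtain ⟨i, hi, hzi⟩ := hz
      exact ⟨i, lt_of_lt_of_le hi hac, hzi⟩
    have hUnion : ⋃ k, Ek k = E := by
      ext z
      simp only [hEkdef, hEdef, Set.mem_iUnion, Finset.mem_range]
      constructor
      · rintro ⟨k, i, _, h⟩; exact ⟨i, h⟩
      · rintro ⟨i, h⟩; exact ⟨i + 1, i, Nat.lt_succ_self i, h⟩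
    have h5 : Tendsto (fun k => μ (Ek k)) atTop (nhds (μ E)) := by
      simpa [hUnion, Function.comp_def] using tendsto_measure_iUnion_atTop (μ := μ) hmono
    have h6 : Tendsto (fun k => (μ (Ek k)).toReal) atTop (nhds (μ E).toReal) :=
      (ENNReal.tendsto_toReal (measure_ne_top μ E)).comp h5
    have h7 : ∀ k, d k = (μ E).toReal - (μ (Ek k)).toReal := fun k => by
      have := hesplit k; linarith
    rw [tendsto_congr h7]
    simpa using (tendsto_const_nhds (x := (μ E).toReal) (f := atTop)).sub h6
  exact tendsto_avg_zero_of_approx (mixFn_nonneg μ T E F) hd0 hle hb hdten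

include hT in
private lemma mix_iUnion_right {E : Set Z} (hE : MeasurableSet E) (f : ℕ → Set Z)
    (hd : Pairwise (Function.onFun Disjoint f)) (hm : ∀ i, MeasurableSet (f i))
    (hmix : ∀ i, Mix μ T E (f i)) : Mix μ T E (⋃ i, f i) := by
  set F := ⋃ i, f i with hFdef
  set Fk : ℕ → Set Z := fun k => ⋃ i ∈ Finset.range k, f i with hFkdef
  have hFm : MeasurableSet F := MeasurableSet.iUnion hm
  have hFkm : ∀ k, MeasurableSet (Fk k) :=
    fun k => (Finset.range k).measurableSet_biUnion (fun i _ => hm i)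
  have hsub : ∀ k, Fk k ⊆ F := fun k => Set.iUnion₂_subset fun i _ => Set.subset_iUnion f i
  set d : ℕ → ℝ := fun k => (μ (F \ Fk k)).toReal with hddef
  have hfsplit : ∀ k, (μ F).toReal = (μ (Fk k)).toReal + d k :=
    fun k => tor_split (hFkm k) (hsub k)
  have hd0 : ∀ k, 0 ≤ d k := fun k => ENNReal.toReal_nonneg
  set b : ℕ → ℕ → ℝ := fun k n => ∑ i ∈ Finset.range k, mixFn μ T E (f i) n with hbdef
  have hle : ∀ k n, mixFn μ T E F n ≤ b k n + d k := by
    intro k n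
    have hTn : Measurable T^[n] := hT.measurable.iterate n
    have hCm : ∀ i, MeasurableSet (T^[n] ⁻¹' f i) := fun i => hTn (hm i)
    have hCkm : MeasurableSet (T^[n] ⁻¹' Fk k) := hTn (hFkm k)
    have hCFm : MeasurableSet (T^[n] ⁻¹' F) := hTn hFm
    have hEk : E ∩ T^[n] ⁻¹' Fk k = ⋃ i ∈ Finset.range k, (E ∩ T^[n] ⁻¹' f i) := by
      rw [hFkdef]; ext z; simp
    have hdisj' : ((Finset.range k : Finset ℕ) : Set ℕ).PairwiseDisjoint
        (fun i => E ∩ T^[n] ⁻¹' f i) := fun i _ j _ hij =>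
      (((hd hij).preimage T^[n])).mono Set.inter_subset_right Set.inter_subset_right
    have h1 : (μ (E ∩ T^[n] ⁻¹' Fk k)).toReal
        = ∑ i ∈ Finset.range k, (μ (E ∩ T^[n] ⁻¹' f i)).toReal := by
      rw [hEk, measure_biUnion_finset hdisj' (fun i _ => hE.inter (hCm i)),
        ENNReal.toReal_sum (fun i _ => measure_ne_top μ _)]
    have h2 : (μ (Fk k)).toReal = ∑ i ∈ Finset.range k, (μ (f i)).toReal := by
      rw [hFkdef]
      rw [measure_biUnion_finset (fun i _ j _ hij => hd hij) (fun i _ => hm i),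
        ENNReal.toReal_sum (fun i _ => measure_ne_top μ _)]
    have hfin : mixFn μ T E (Fk k) n ≤ b k n := by
      rw [mixFn, h1, h2, Finset.mul_sum, ← Finset.sum_sub_distrib]
      exact (Finset.abs_sum_le_sum_abs _ _).trans (le_of_eq rfl)
    have hxsplit : (μ (E ∩ T^[n] ⁻¹' F)).toReal
        = (μ (E ∩ T^[n] ⁻¹' Fk k)).toReal
          + (μ ((E ∩ T^[n] ⁻¹' F) \ (E ∩ T^[n] ⁻¹' Fk k))).toReal :=
      tor_split (hE.inter hCkm)
        (Set.inter_subset_inter_right _ (Set.preimage_mono (hsub k)))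
    have hr_le : (μ ((E ∩ T^[n] ⁻¹' F) \ (E ∩ T^[n] ⁻¹' Fk k))).toReal ≤ d k := by
      have hsubset : (E ∩ T^[n] ⁻¹' F) \ (E ∩ T^[n] ⁻¹' Fk k)
          ⊆ T^[n] ⁻¹' (F \ Fk k) := by
        intro z hz
        exact ⟨hz.1.2, fun h => hz.2 ⟨hz.1.1, h⟩⟩
      have := tor_mono (μ := μ) hsubset
      rwa [(hT.iterate n).measure_preimage ((hFm.diff (hFkm k)).nullMeasurableSet)] at this
    have hstep : mixFn μ T E F n ≤ mixFn μ T E (Fk k) n + d k := by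
      rw [mixFn, mixFn, hxsplit, hfsplit k, mul_add]
      exact abs_step ENNReal.toReal_nonneg hr_le
        (mul_nonneg ENNReal.toReal_nonneg (hd0 k))
        (mul_le_of_le_one_left (hd0 k) (tor_le_one E))
    linarith
  have hb : ∀ k, Tendsto (avg (b k)) atTop (nhds 0) :=
    fun k => tendsto_avg_sum (Finset.range k) _ (fun i _ => hmix i)
  have hdten : Tendsto d atTop (nhds 0) := by
    have hmono : Monotone Fk := by
      intro a c hac z hz
      simp only [hFkdef, Set.mem_iUnion, Finset.mem_range] at hz ⊢
      obtain ⟨i, hi, hzi⟩ := hz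
      exact ⟨i, lt_of_lt_of_le hi hac, hzi⟩
    have hUnion : ⋃ k, Fk k = F := by
      ext z
      simp only [hFkdef, hFdef, Set.mem_iUnion, Finset.mem_range]
      constructor
      · rintro ⟨k, i, _, h⟩; exact ⟨i, h⟩
      · rintro ⟨i, h⟩; exact ⟨i + 1, i, Nat.lt_succ_self i, h⟩
    have h5 : Tendsto (fun k => μ (Fk k)) atTop (nhds (μ F)) := by
      simpa [hUnion, Function.comp_def] using tendsto_measure_iUnion_atTop (μ := μ) hmono
    have h6 : Tendsto (fun k => (μ (Fk k)).toReal) atTop (nhds (μ F).toReal) :=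
      (ENNReal.tendsto_toReal (measure_ne_top μ F)).comp h5
    have h7 : ∀ k, d k = (μ F).toReal - (μ (Fk k)).toReal := fun k => by
      have := hfsplit k; linarith
    rw [tendsto_congr h7]
    simpa using (tendsto_const_nhds (x := (μ F).toReal) (f := atTop)).sub h6
  exact tendsto_avg_zero_of_approx (mixFn_nonneg μ T E F) hd0 hle hb hdten

end Unions

private lemma avg_add (u v : ℕ → ℝ) (N : ℕ) :
    avg (fun n => u n + v n) N = avg u N + avg v N := by
  rw [avg, avg, avg, Finset.sum_add_distrib, mul_add]

section Product

variable {X Y : Type} [MeasurableSpace X] [MeasurableSpace Y]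
  (μ : Measure X) (ν : Measure Y) [IsProbabilityMeasure μ] [IsProbabilityMeasure ν]
  (T : X → X) (S : Y → Y)

private lemma mixFn_prod_rect (n : ℕ) (A C : Set X) (B D : Set Y) :
    mixFn (μ.prod ν) (Prod.map T S) (A ×ˢ B) (C ×ˢ D) n
      ≤ mixFn μ T A C n + mixFn ν S B D n := by
  have hpre : (Prod.map T S)^[n] ⁻¹' (C ×ˢ D) = (T^[n] ⁻¹' C) ×ˢ (S^[n] ⁻¹' D) := by
    rw [Prod.map_iterate]; rfl
  rw [mixFn, mixFn, mixFn, hpre, Set.prod_inter_prod, Measure.prod_prod,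
    Measure.prod_prod, Measure.prod_prod, ENNReal.toReal_mul, ENNReal.toReal_mul,
    ENNReal.toReal_mul]
  set x := (μ (A ∩ T^[n] ⁻¹' C)).toReal with hx
  set y := (ν (B ∩ S^[n] ⁻¹' D)).toReal with hy
  set a := (μ A).toReal
  set b := (ν B).toReal
  set c := (μ C).toReal
  set e := (ν D).toReal
  have hy0 : 0 ≤ y := ENNReal.toReal_nonneg
  have hy1 : y ≤ 1 := tor_le_one _
  have hac0 : (0:ℝ) ≤ a * c := mul_nonneg ENNReal.toReal_nonneg ENNReal.toReal_nonneg
  have hac1 : a * c ≤ 1 :=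
    mul_le_one₀ (tor_le_one _) ENNReal.toReal_nonneg (tor_le_one _)
  have h : x * y - a * b * (c * e) = (x - a * c) * y + (a * c) * (y - b * e) := by ring
  calc |x * y - a * b * (c * e)|
      ≤ |(x - a * c) * y| + |(a * c) * (y - b * e)| := by rw [h]; exact abs_add_le _ _
    _ = |x - a * c| * y + (a * c) * |y - b * e| := by
        rw [abs_mul, abs_mul, abs_of_nonneg hy0, abs_of_nonneg hac0]
    _ ≤ |x - a * c| + |y - b * e| := by
        have h1 : |x - a * c| * y ≤ |x - a * c| :=
          mul_le_of_le_one_right (abs_nonneg _) hy1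
        have h2 : (a * c) * |y - b * e| ≤ |y - b * e| :=
          mul_le_of_le_one_left (abs_nonneg _) hac1
        linarith

private lemma weakMixing_prod (hT : MeasurePreserving T μ μ) (hS : MeasurePreserving S ν ν)
    (hwT : WeakMixing μ T) (hwS : WeakMixing ν S) :
    WeakMixing (μ.prod ν) (Prod.map T S) := by
  have hR : MeasurePreserving (Prod.map T S) (μ.prod ν) (μ.prod ν) := hT.prod hS
  have hrect : ∀ (A C : Set X) (B D : Set Y), MeasurableSet A → MeasurableSet C →
      MeasurableSet B → MeasurableSet D →
      Mix (μ.prod ν) (Prod.map T S) (A ×ˢ B) (C ×ˢ D) := by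
    intro A C B D hA hC hB hD
    refine tendsto_avg_zero_of_le (mixFn_nonneg _ _ _ _)
      (fun n => mixFn_prod_rect μ ν T S n A C B D) ?_
    have h1 : Tendsto (avg (mixFn μ T A C)) atTop (nhds 0) := hwT A C hA hC
    have h2 : Tendsto (avg (mixFn ν S B D)) atTop (nhds 0) := hwS B D hB hD
    have h3 := h1.add h2
    rw [add_zero] at h3
    exact h3.congr fun N => (avg_add _ _ N).symm
  intro E F hE hF
  have phase1 : ∀ ⦃E' : Set (X × Y)⦄, MeasurableSet E' →
      ∀ G ∈ Set.image2 (· ×ˢ ·) { s : Set X | MeasurableSet s }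
        { t : Set Y | MeasurableSet t },
      Mix (μ.prod ν) (Prod.map T S) E' G := by
    refine MeasurableSpace.induction_on_inter generateFrom_prod.symm isPiSystem_prod
      ?_ ?_ ?_ ?_
    · intro G _; exact mix_empty_left G
    · rintro t ⟨s1, hs1, t1, ht1, rfl⟩ G ⟨s2, hs2, t2, ht2, rfl⟩
      exact hrect s1 s2 t1 t2 hs1 hs2 ht1 ht2
    · intro t ht hind G hG
      obtain ⟨s2, hs2, t2, ht2, rfl⟩ := hG
      exact mix_compl_left hR ht ((hs2 : MeasurableSet s2).prod ht2)
        (hind _ ⟨s2, hs2, t2, ht2, rfl⟩)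
    · intro g hdisj hmeas hind G hG
      obtain ⟨s2, hs2, t2, ht2, rfl⟩ := hG
      exact mix_iUnion_left hR ((hs2 : MeasurableSet s2).prod ht2) g hdisj hmeas
        (fun i => hind i _ ⟨s2, hs2, t2, ht2, rfl⟩)
  have phase2 : ∀ ⦃F' : Set (X × Y)⦄, MeasurableSet F' →
      Mix (μ.prod ν) (Prod.map T S) E F' := by
    refine MeasurableSpace.induction_on_inter generateFrom_prod.symm isPiSystem_prod
      ?_ ?_ ?_ ?_
    · exact mix_empty_right E
    · intro t ht; exact phase1 hE t ht
    · intro t ht h; exact mix_compl_right hR hE ht h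
    · intro g hdisj hmeas hind; exact mix_iUnion_right hR hE g hdisj hmeas hind
  exact phase2 hF

end Product

/-- The intersection of two dynamical C*-sets is a dynamical C*-set. -/
theorem dynCStar_inter (A B : Set ℕ) (hA : DynCStar A) (hB : DynCStar B) :
    DynCStar (A ∩ B) := by
  obtain ⟨X, mX, μ, T, hμ, hT, hwT, A₀, A₁, hA₀, hA₁, hApos, hAsub⟩ := hA
  obtain ⟨Y, mY, ν, S, hν, hS, hwS, B₀, B₁, hB₀, hB₁, hBpos, hBsub⟩ := hB
  haveI := hμ; haveI := hν
  obtain ⟨hA₀pos, hA₁pos⟩ := CanonicallyOrderedAdd.mul_pos.1 hApos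
  obtain ⟨hB₀pos, hB₁pos⟩ := CanonicallyOrderedAdd.mul_pos.1 hBpos
  refine ⟨X × Y, inferInstance, μ.prod ν, Prod.map T S, inferInstance, hT.prod hS,
    weakMixing_prod μ ν T S hT hS hwT hwS, A₀ ×ˢ B₀, A₁ ×ˢ B₁, hA₀.prod hB₀,
    hA₁.prod hB₁, ?_, ?_⟩
  · rw [Measure.prod_prod, Measure.prod_prod]
    exact CanonicallyOrderedAdd.mul_pos.2
      ⟨CanonicallyOrderedAdd.mul_pos.2 ⟨hA₀pos, hB₀pos⟩,
       CanonicallyOrderedAdd.mul_pos.2 ⟨hA₁pos, hB₁pos⟩⟩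
  · intro n hn
    simp only [Set.mem_setOf_eq] at hn
    rw [Prod.map_iterate, Set.preimage_prod_map_prod, Set.prod_inter_prod,
      Measure.prod_prod, CanonicallyOrderedAdd.mul_pos] at hn
    exact ⟨hAsub hn.1, hBsub hn.2⟩
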